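/- For every ω ∈ ℂ ∖ 𝒞 the following four identities hold: (1) (1+a^2)·ω·G(ω)·(a - G(ω)G(1/ω)) = (G(1/ω) + a·G(ω))·(a^2 + G(ω)^2) / √(ω^{-2}+2c); (2) -(1+a^2)·ω·G(ω)·(a·G(1/ω) + G(ω)) = (-1 + a·G(1/ω)G(ω))·(a^2 + G(ω)^2) / √(ω^{-2}+2c); (3) (1+a^2)·ω·G(ω)·(a·G(ω) + G(1/ω)) = (a - G(1/ω)G(ω))·(1 + a^2·G(ω)^2) / √(ω^{-2}+2c); (4) -(1+a^2)·ω·G(ω)·(-1 + a·G(ω)G(1/ω)) = (a·G(1/ω) + G(ω))·(1 + a^2·G(ω)^2) / √(ω^{-2}+2c). -/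
import Mathlib


/-- `c = a/(1+a²)`. -/
noncomputable def cOf (a : ℝ) : ℝ := a / (1 + a ^ 2)

/-- The branch of the logarithm with argument in `(-π/2, 3π/2]`:
`L(z) = Log(-iz) + iπ/2` where `Log` is the principal branch. -/
noncomputable def Lbr (z : ℂ) : ℂ :=
  Complex.log (-Complex.I * z) + Complex.I * ((Real.pi : ℂ) / 2)

/-- The branch `√(ω² + 2c) = exp((1/2)L(ω + i√(2c)) + (1/2)L(ω - i√(2c)))`. -/
noncomputable def sqBr (a : ℝ) (ω : ℂ) : ℂ :=
  Complex.exp ((1 / 2 : ℂ) * Lbr (ω + Complex.I * (Real.sqrt (2 * cOf a) : ℂ)) +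
    (1 / 2 : ℂ) * Lbr (ω - Complex.I * (Real.sqrt (2 * cOf a) : ℂ)))

/-- `G(ω) = (ω - √(ω² + 2c))/√(2c)`. -/
noncomputable def Gbr (a : ℝ) (ω : ℂ) : ℂ :=
  (ω - sqBr a ω) / (Real.sqrt (2 * cOf a) : ℂ)

/-- The branch cuts `𝒞 = i·((-∞, -1/√(2c)] ∪ [-√(2c), √(2c)] ∪ [1/√(2c), ∞))`. -/
def cuts (a : ℝ) : Set ℂ :=
  {z : ℂ | ∃ t : ℝ, z = Complex.I * (t : ℂ) ∧
    (t ≤ -(1 / Real.sqrt (2 * cOf a)) ∨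
      (-Real.sqrt (2 * cOf a) ≤ t ∧ t ≤ Real.sqrt (2 * cOf a)) ∨
      1 / Real.sqrt (2 * cOf a) ≤ t)}


/-- `exp (Lbr z) = z` for `z ≠ 0`. -/
lemma exp_Lbr (z : ℂ) (hz : z ≠ 0) : Complex.exp (Lbr z) = z := by
  have h1 : -Complex.I * z ≠ 0 := by
    simp [Complex.I_ne_zero, hz]
  have h2 : Complex.exp (Complex.I * ((Real.pi : ℂ) / 2)) = Complex.I := by
    have h3 : Complex.I * ((Real.pi : ℂ) / 2) = ((Real.pi / 2 : ℝ) : ℂ) * Complex.I := by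
      push_cast; ring
    rw [h3, Complex.exp_mul_I, ← Complex.ofReal_cos, ← Complex.ofReal_sin,
      Real.cos_pi_div_two, Real.sin_pi_div_two]
    simp
  rw [Lbr, Complex.exp_add, Complex.exp_log h1, h2]
  linear_combination (-z) * Complex.I_sq

/-- The square of the branch `sqBr`. -/
lemma sq_sqBr (a : ℝ) (z : ℂ)
    (h1 : z + Complex.I * (Real.sqrt (2 * cOf a) : ℂ) ≠ 0)
    (h2 : z - Complex.I * (Real.sqrt (2 * cOf a) : ℂ) ≠ 0)
    (hc : 0 ≤ 2 * cOf a) :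
    sqBr a z ^ 2 = z ^ 2 + 2 * (cOf a : ℂ) := by
  have key : sqBr a z ^ 2 =
      Complex.exp (Lbr (z + Complex.I * (Real.sqrt (2 * cOf a) : ℂ))) *
      Complex.exp (Lbr (z - Complex.I * (Real.sqrt (2 * cOf a) : ℂ))) := by
    rw [sqBr, ← Complex.exp_nat_mul, ← Complex.exp_add]
    ring_nf
  rw [key, exp_Lbr _ h1, exp_Lbr _ h2]
  have hs : ((Real.sqrt (2 * cOf a) : ℝ) : ℂ) ^ 2 = 2 * (cOf a : ℂ) := by
    rw [← Complex.ofReal_pow, Real.sq_sqrt hc]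
    push_cast; ring
  linear_combination (-Complex.I ^ 2) * hs - (2 * ((cOf a : ℝ) : ℂ)) * Complex.I_sq

/-- Four algebraic identities relating `G(ω)`, `G(1/ω)` and `√(ω⁻²+2c)`,
valid for every `ω ∈ ℂ ∖ 𝒞`. -/
theorem statement4 (a : ℝ) (ha0 : 0 < a) (ha1 : a < 1) (ω : ℂ) (hω : ω ∉ cuts a) :
    (1 + (a : ℂ) ^ 2) * ω * Gbr a ω * ((a : ℂ) - Gbr a ω * Gbr a ω⁻¹) =
      (Gbr a ω⁻¹ + (a : ℂ) * Gbr a ω) * ((a : ℂ) ^ 2 + Gbr a ω ^ 2) / sqBr a ω⁻¹ ∧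
    -((1 + (a : ℂ) ^ 2) * ω * Gbr a ω * ((a : ℂ) * Gbr a ω⁻¹ + Gbr a ω)) =
      (-1 + (a : ℂ) * Gbr a ω⁻¹ * Gbr a ω) * ((a : ℂ) ^ 2 + Gbr a ω ^ 2) / sqBr a ω⁻¹ ∧
    (1 + (a : ℂ) ^ 2) * ω * Gbr a ω * ((a : ℂ) * Gbr a ω + Gbr a ω⁻¹) =
      ((a : ℂ) - Gbr a ω⁻¹ * Gbr a ω) * (1 + (a : ℂ) ^ 2 * Gbr a ω ^ 2) / sqBr a ω⁻¹ ∧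
    -((1 + (a : ℂ) ^ 2) * ω * Gbr a ω * (-1 + (a : ℂ) * Gbr a ω * Gbr a ω⁻¹)) =
      ((a : ℂ) * Gbr a ω⁻¹ + Gbr a ω) * (1 + (a : ℂ) ^ 2 * Gbr a ω ^ 2) / sqBr a ω⁻¹ := by
  classical
  have hc : 0 < cOf a := by
    rw [cOf]; positivity
  set s : ℝ := Real.sqrt (2 * cOf a) with hsdef
  have hs_pos : 0 < s := Real.sqrt_pos.mpr (by linarith)
  have hs0 : (s : ℂ) ≠ 0 := by exact_mod_cast hs_pos.ne'
  have hs2 : (s : ℂ) ^ 2 = 2 * ((cOf a : ℝ) : ℂ) := by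
    rw [hsdef, ← Complex.ofReal_pow, Real.sq_sqrt (by linarith : (0:ℝ) ≤ 2 * cOf a)]
    push_cast; ring
  have ha2 : (1 + (a : ℂ) ^ 2) ≠ 0 := by
    intro h
    have : (1 + a ^ 2 : ℝ) = 0 := by exact_mod_cast h
    nlinarith
  have h4 : ((cOf a : ℝ) : ℂ) * (1 + (a : ℂ) ^ 2) = (a : ℂ) := by
    rw [cOf]
    push_cast
    exact div_mul_cancel₀ _ ha2
  have hmem : ∀ t : ℝ, ω = Complex.I * (t : ℂ) →
      ¬(t ≤ -(1 / s) ∨ (-s ≤ t ∧ t ≤ s) ∨ 1 / s ≤ t) := by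
    intro t h1 h2
    exact hω ⟨t, h1, h2⟩
  have hω0 : ω ≠ 0 := by
    intro h
    exact hmem 0 (by simp [h]) (Or.inr (Or.inl ⟨by linarith, by linarith⟩))
  have hωp : ω + Complex.I * (s : ℂ) ≠ 0 := by
    intro h
    refine hmem (-s) ?_ (Or.inr (Or.inl ⟨le_refl _, by linarith⟩))
    push_cast
    linear_combination h
  have hωm : ω - Complex.I * (s : ℂ) ≠ 0 := by
    intro h
    refine hmem s ?_ (Or.inr (Or.inl ⟨by linarith, le_refl _⟩))
    linear_combination h
  have hivp : ω⁻¹ + Complex.I * (s : ℂ) ≠ 0 := by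
    intro h
    have hiv : ω⁻¹ = -(Complex.I * (s : ℂ)) := by linear_combination h
    have hωeq : ω = Complex.I * ((1 / s : ℝ) : ℂ) := by
      rw [← inv_inv ω, hiv]
      refine inv_eq_of_mul_eq_one_left ?_
      push_cast
      linear_combination (-Complex.I ^ 2) * (inv_mul_cancel₀ hs0) - Complex.I_sq
    exact hmem (1 / s) hωeq (Or.inr (Or.inr (le_refl _)))
  have hivm : ω⁻¹ - Complex.I * (s : ℂ) ≠ 0 := by
    intro h
    have hiv : ω⁻¹ = Complex.I * (s : ℂ) := by linear_combination h
    have hωeq : ω = Complex.I * ((-(1 / s) : ℝ) : ℂ) := by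
      rw [← inv_inv ω, hiv]
      refine inv_eq_of_mul_eq_one_left ?_
      push_cast
      linear_combination (-Complex.I ^ 2) * (inv_mul_cancel₀ hs0) - Complex.I_sq
    exact hmem (-(1 / s)) hωeq (Or.inl (le_refl _))
  have hS2 : sqBr a ω ^ 2 = ω ^ 2 + 2 * ((cOf a : ℝ) : ℂ) :=
    sq_sqBr a ω hωp hωm (by linarith)
  have hT2 : sqBr a ω⁻¹ ^ 2 = (ω⁻¹) ^ 2 + 2 * ((cOf a : ℝ) : ℂ) :=
    sq_sqBr a ω⁻¹ hivp hivm (by linarith)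
  have hT0 : sqBr a ω⁻¹ ≠ 0 := Complex.exp_ne_zero _
  set u : ℂ := Gbr a ω with hudef
  set v : ℂ := Gbr a ω⁻¹ with hvdef
  set T : ℂ := sqBr a ω⁻¹ with hTdef
  have hinv : ω * ω⁻¹ = 1 := mul_inv_cancel₀ hω0
  have hcan : ∀ x : ℂ, (s : ℂ) * (x / (s : ℂ)) = x := by
    intro x
    rw [mul_comm, div_mul_cancel₀ _ hs0]
  have hSu : sqBr a ω = ω - (s : ℂ) * u := by
    rw [hudef, Gbr, ← hsdef, hcan]
    ring
  have hTv : T = ω⁻¹ - (s : ℂ) * v := by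
    rw [hTdef, hvdef, Gbr, ← hsdef, hcan]
    ring
  have hu : (s : ℂ) * u ^ 2 = 2 * ω * u + s := by
    apply mul_left_cancel₀ hs0
    have h := hS2
    rw [hSu] at h
    linear_combination h - hs2
  have hv : (s : ℂ) * v ^ 2 = 2 * ω⁻¹ * v + s := by
    apply mul_left_cancel₀ hs0
    have h := hT2
    rw [hTv] at h
    linear_combination h - hs2
  have hW0 : (s : ℂ) ^ 2 * (u ^ 2 - 1) * (v ^ 2 - 1) = 4 * u * v := by
    linear_combination ((s:ℂ) * (u^2 - 1)) * hv + (2 * ω⁻¹ * v) * hu + 4 * u * v * hinv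
  have hW : (a : ℂ) * (u ^ 2 - 1) * (v ^ 2 - 1) = 2 * u * v * (1 + (a : ℂ) ^ 2) := by
    linear_combination ((1 + (a:ℂ)^2) / 2) * hW0 - (u^2 - 1) * (v^2 - 1) * h4
      - ((1 + (a:ℂ)^2) / 2) * (u^2 - 1) * (v^2 - 1) * hs2
  have hB : 2 * ω * u * T = 2 * u - 2 * ((cOf a : ℝ) : ℂ) * v * (u ^ 2 - 1) := by
    linear_combination (2 * ω * u) * hTv + (2 * u) * hinv + ((s:ℂ) * v) * hu
      - v * (u^2 - 1) * hs2
  refine ⟨?_, ?_, ?_, ?_⟩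
  · rw [eq_div_iff hT0]
    linear_combination ((1 + (a:ℂ)^2) * ((a:ℂ) - u * v) / 2) * hB
      + (v * ((a:ℂ) - u * v) * (1 - u^2)) * h4 + u * hW
  · rw [eq_div_iff hT0]
    linear_combination (-(1 + (a:ℂ)^2) * ((a:ℂ) * v + u) / 2) * hB
      + (-v * ((a:ℂ) * v + u) * (1 - u^2)) * h4 + (a:ℂ) * hW
  · rw [eq_div_iff hT0]
    linear_combination ((1 + (a:ℂ)^2) * (v + u * (a:ℂ)) / 2) * hB
      + (v * (v + u * (a:ℂ)) * (1 - u^2)) * h4 - hW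
  · rw [eq_div_iff hT0]
    linear_combination ((1 + (a:ℂ)^2) * (1 - u * v * (a:ℂ)) / 2) * hB
      + (v * (1 - u * v * (a:ℂ)) * (1 - u^2)) * h4 + u * (a:ℂ) * hW
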